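/- Tuple certainty characterization for tuple-level WSDs without variables: let W = {C_1,...,C_m} be a set of nonempty component relations whose product encodes the worlds (each component tuple defines a set of database tuples, possibly including the padding tuple t_⊥ which contributes nothing). A database tuple t is present in every world represented by W if and only if there exists a component C_i such that every component tuple of C_i contains t among the tuples it defines. -/
import Mathlib


theorem stmt_14 {W T : Type*} (m : ℕ) (C : Fin m → Set W)
    (hCne : ∀ i, (C i).Nonempty) (hCfin : ∀ i, (C i).Finite)
    (decode : W → Set T) (hdec : ∀ u, (decode u).Finite) (t : T) :
    (∀ w : Fin m → W, (∀ i, w i ∈ C i) → t ∈ ⋃ i, decode (w i)) ↔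
      ∃ i, ∀ u ∈ C i, t ∈ decode u := by
  constructor
  · intro h
    by_contra hc
    push_neg at hc
    choose w hw ht using hc
    have := h w hw
    simp only [Set.mem_iUnion] at this
    obtain ⟨i, hi⟩ := this
    exact ht i hi
  · rintro ⟨i, hi⟩ w hw
    exact Set.mem_iUnion.2 ⟨i, hi _ (hw i)⟩
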